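/- Let a1, a2, a3 be nonzero real numbers with A = a1*a2 + a1*a3 + a2*a3 ≠ 0, and let x1, x2, x3 be positive reals. Then f(x1,x2,x3)/(a1*x1) + g(x1,x2,x3)/(a2*x2) + h(x1,x2,x3)/(a3*x3) = 0. (This expresses that the volume function V = x1^(1/a1) * x2^(1/a2) * x3^(1/a3) is a first integral of the system dx1/dt = f, dx2/dt = g, dx3/dt = h.) -/

import Mathlib

noncomputable section
open Real Set

/-- The auxiliary function `B`. -/
def Bfun (a1 a2 a3 x1 x2 x3 : ℝ) : ℝ :=
  (1/(a1*x1) + 1/(a2*x2) + 1/(a3*x3) - (x1/(x2*x3) + x2/(x1*x3) + x3/(x1*x2))) *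
    (1/a1 + 1/a2 + 1/a3)⁻¹

/-- First component of the normalized Ricci flow vector field. -/
def fRF (a1 a2 a3 x1 x2 x3 : ℝ) : ℝ :=
  -1 - a1*x1*(x1/(x2*x3) - x2/(x1*x3) - x3/(x1*x2)) + x1 * Bfun a1 a2 a3 x1 x2 x3

/-- Second component of the normalized Ricci flow vector field. -/
def gRF (a1 a2 a3 x1 x2 x3 : ℝ) : ℝ :=
  -1 - a2*x2*(x2/(x1*x3) - x3/(x1*x2) - x1/(x2*x3)) + x2 * Bfun a1 a2 a3 x1 x2 x3

/-- Third component of the normalized Ricci flow vector field. -/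
def hRF (a1 a2 a3 x1 x2 x3 : ℝ) : ℝ :=
  -1 - a3*x3*(x3/(x1*x2) - x1/(x2*x3) - x2/(x1*x3)) + x3 * Bfun a1 a2 a3 x1 x2 x3

set_option maxHeartbeats 2000000 in
theorem volume_first_integral (a1 a2 a3 x1 x2 x3 : ℝ)
    (ha1 : a1 ≠ 0) (ha2 : a2 ≠ 0) (ha3 : a3 ≠ 0)
    (hA : a1*a2 + a1*a3 + a2*a3 ≠ 0)
    (hx1 : 0 < x1) (hx2 : 0 < x2) (hx3 : 0 < x3) :
    fRF a1 a2 a3 x1 x2 x3 / (a1*x1) + gRF a1 a2 a3 x1 x2 x3 / (a2*x2)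
      + hRF a1 a2 a3 x1 x2 x3 / (a3*x3) = 0 := by
  have h1 := hx1.ne'
  have h2 := hx2.ne'
  have h3 := hx3.ne'
  have hB : Bfun a1 a2 a3 x1 x2 x3 =
      (a2*a3*x2*x3 + a1*a3*x1*x3 + a1*a2*x1*x2 - a1*a2*a3*(x1^2+x2^2+x3^2)) /
        ((a1*a2 + a1*a3 + a2*a3) * (x1*x2*x3)) := by
    have hs : a2*a3 + a1*a3 + a1*a2 ≠ 0 := by
      intro h; apply hA; linarith
    have key : 1/a1 + 1/a2 + 1/a3 = (a2*a3 + a1*a3 + a1*a2)/(a1*a2*a3) := by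
      field_simp
    unfold Bfun
    rw [key, inv_div]
    field_simp
    ring
  unfold fRF gRF hRF
  rw [hB]
  have hA' : a1 * (a2 + a3) + a2 * a3 ≠ 0 := by intro h; apply hA; linarith
  field_simp
  ring
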